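/- arXiv:1509.06210 — 3 statements merged into one kernel-verified Lean document; each statement's English description precedes it below -/
import Mathlib

section
/- (Existence of minimizer, long positions) Let (p^n) be functions on (0,∞), each non-increasing and continuous, with: (i) there exists γ>0 with limsup_n sup_{0<q≤γ} q|p^n(q)| < ∞; (ii) there exist r_n → ∞ and δ>0 with p^n(ℓ r_n) → p∞(ℓ) for 0<ℓ<δ; (iii) limsup_n p^n(∞) < p∞₊(0) where p^n(∞) := lim_{q→∞} p^n(q) and p∞₊(0) := lim_{ℓ↓0} p∞(ℓ). If p̃^n → p̃ with limsup_n p^n(∞) < p̃ < p∞₊(0), then for all n large enough the problem inf_{q>0} (q p̃^n - q p^n(q)) admits a minimizer q̂_n > 0. -/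
open Filter Topology

theorem stmt6 (p : ℕ → ℝ → ℝ)
    (hanti : ∀ n, AntitoneOn (p n) (Set.Ioi 0))
    (hcont : ∀ n, ContinuousOn (p n) (Set.Ioi 0))
    (γ : ℝ) (hγ : 0 < γ)
    (hbound : ∃ C : ℝ, ∀ᶠ n in atTop, ∀ q ∈ Set.Ioc (0:ℝ) γ, q * |p n q| ≤ C)
    (r : ℕ → ℝ) (hrpos : ∀ n, 0 < r n) (hr : Tendsto r atTop atTop)
    (δ : ℝ) (hδ : 0 < δ) (pinf : ℝ → ℝ)
    (hconv : ∀ ℓ : ℝ, 0 < ℓ → ℓ < δ → Tendsto (fun n => p n (ℓ * r n)) atTop (𝓝 (pinf ℓ)))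
    (pninf : ℕ → ℝ) (hpninf : ∀ n, Tendsto (fun q => p n q) atTop (𝓝 (pninf n)))
    (pinf0 : ℝ) (hpinf0 : Tendsto pinf (𝓝[>] 0) (𝓝 pinf0))
    (pt : ℕ → ℝ) (ptl : ℝ) (hpt : Tendsto pt atTop (𝓝 ptl))
    (hlb : ∃ m : ℝ, m < ptl ∧ ∀ᶠ n in atTop, pninf n ≤ m)
    (hub : ptl < pinf0) :
    ∃ N : ℕ, ∀ n ≥ N, ∃ qh : ℝ, 0 < qh ∧
      ∀ q : ℝ, 0 < q → qh * pt n - qh * p n qh ≤ q * pt n - q * p n q := by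
  obtain ⟨C, hC⟩ := hbound
  obtain ⟨m, hm, hmev⟩ := hlb
  have hdpos : (0:ℝ) < ptl - m := by linarith
  set d := ptl - m with hd
  -- choose ℓ ∈ (0, δ) with pinf ℓ > ptl
  have hℓex : ∃ ℓ : ℝ, 0 < ℓ ∧ ℓ < δ ∧ ptl < pinf ℓ := by
    have h1 : ∀ᶠ ℓ in 𝓝[>] (0:ℝ), ptl < pinf ℓ :=
      hpinf0.eventually (eventually_gt_nhds hub)
    have h2 : ∀ᶠ ℓ in 𝓝[>] (0:ℝ), ℓ < δ :=
      nhdsWithin_le_nhds (Iio_mem_nhds hδ)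
    have h3 : ∀ᶠ ℓ in 𝓝[>] (0:ℝ), (0:ℝ) < ℓ := self_mem_nhdsWithin
    obtain ⟨ℓ, hℓ3, hℓ2, hℓ1⟩ := (h3.and (h2.and h1)).exists
    exact ⟨ℓ, hℓ3, hℓ2, hℓ1⟩
  obtain ⟨ℓ, hℓpos, hℓδ, hℓpt⟩ := hℓex
  set K := γ * (|ptl| + d/4) + C with hK
  have hmul : Tendsto (fun n => ℓ * r n) atTop atTop := hr.const_mul_atTop hℓpos
  have hq_tendsto : Tendsto (fun n => (ℓ * r n) * (pt n - p n (ℓ * r n))) atTop atBot := by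
    have hg : Tendsto (fun n => pt n - p n (ℓ * r n)) atTop (𝓝 (ptl - pinf ℓ)) :=
      hpt.sub (hconv ℓ hℓpos hℓδ)
    exact hmul.atTop_mul_neg (by linarith) hg
  have hptd : ∀ᶠ n in atTop, |pt n - ptl| < d/4 := by
    have := hpt.eventually (Metric.eventually_nhds_iff.mpr
      ⟨d/4, by positivity, fun {x} hx => hx⟩)
    simpa [Real.dist_eq] using this
  have hEv : ∀ᶠ n in atTop,
      (∀ q ∈ Set.Ioc (0:ℝ) γ, q * |p n q| ≤ C) ∧
      |pt n - ptl| < d/4 ∧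
      pninf n ≤ m ∧
      (ℓ * r n) * (pt n - p n (ℓ * r n)) < min (-K - 1) (-1) ∧
      γ ≤ ℓ * r n := by
    filter_upwards [hC, hptd, hmev,
      hq_tendsto.eventually (eventually_lt_atBot (min (-K - 1) (-1))),
      hmul.eventually_ge_atTop γ] with n a b c e f
    exact ⟨a, b, c, e, f⟩
  obtain ⟨N, hN⟩ := eventually_atTop.mp hEv
  refine ⟨N, fun n hn => ?_⟩
  obtain ⟨h1, h2, h3, h4, h5⟩ := hN n hn
  set qn := ℓ * r n with hqn
  have hqnpos : 0 < qn := lt_of_lt_of_le hγ h5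
  -- bound p n q for large q
  have hQ' : ∀ᶠ q in atTop, p n q < pninf n + d/4 :=
    (hpninf n).eventually (eventually_lt_nhds (by linarith))
  obtain ⟨Q0, hQ0⟩ := eventually_atTop.mp hQ'
  set M := max (max Q0 γ) qn with hM
  have hγM : γ ≤ M := le_trans (le_max_right Q0 γ) (le_max_left _ _)
  have hqnM : qn ≤ M := le_max_right _ _
  have hQ0M : Q0 ≤ M := le_trans (le_max_left Q0 γ) (le_max_left _ _)
  have hsub : Set.Icc γ M ⊆ Set.Ioi 0 := fun x hx => lt_of_lt_of_le hγ hx.1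
  have hcg : ContinuousOn (fun q : ℝ => q * pt n - q * p n q) (Set.Icc γ M) :=
    (continuousOn_id.mul continuousOn_const).sub
      (continuousOn_id.mul ((hcont n).mono hsub))
  obtain ⟨qh, hqhmem, hmin⟩ :=
    isCompact_Icc.exists_isMinOn ⟨qn, h5, hqnM⟩ hcg
  have hminq : ∀ x ∈ Set.Icc γ M, qh * pt n - qh * p n qh ≤ x * pt n - x * p n x :=
    fun x hx => hmin hx
  have hqhpos : 0 < qh := lt_of_lt_of_le hγ hqhmem.1
  -- value at qn is very negative
  have h4' : qn * pt n - qn * p n qn < min (-K - 1) (-1) := by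
    rw [mul_sub] at h4; exact h4
  have hgqn : qh * pt n - qh * p n qh < min (-K - 1) (-1) :=
    lt_of_le_of_lt (hminq qn ⟨h5, hqnM⟩) h4'
  have habs : |pt n| ≤ |ptl| + d/4 := by
    have := abs_sub_abs_le_abs_sub (pt n) ptl
    linarith
  have hptlb : ptl - d/4 < pt n := by
    have := abs_lt.mp h2
    linarith [this.1]
  refine ⟨qh, hqhpos, fun q hq => ?_⟩
  rcases le_or_gt q γ with hqγ | hqγ
  · -- small q : lower bound -K
    have hb := h1 q ⟨hq, hqγ⟩
    have hb1 : q * pt n ≥ -(γ * (|ptl| + d/4)) := by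
      have e1 : q * (-|pt n|) ≤ q * pt n :=
        mul_le_mul_of_nonneg_left (neg_abs_le (pt n)) hq.le
      have e2 : q * |pt n| ≤ γ * (|ptl| + d/4) :=
        mul_le_mul hqγ habs (abs_nonneg _) hγ.le
      nlinarith
    have hb2 : q * p n q ≤ C := by
      have : q * p n q ≤ q * |p n q| :=
        mul_le_mul_of_nonneg_left (le_abs_self _) hq.le
      linarith
    have : -K ≤ q * pt n - q * p n q := by rw [hK]; linarith
    have hmin1 : min (-K - 1) (-1) ≤ -K - 1 := min_le_left _ _
    linarith
  · rcases le_or_gt q M with hqM | hqM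
    · exact hminq q ⟨hqγ.le, hqM⟩
    · -- large q : positive value
      have hpq : p n q < pninf n + d/4 := hQ0 q (le_trans hQ0M hqM.le)
      have hpos : 0 < pt n - p n q := by linarith
      have : 0 < q * pt n - q * p n q := by nlinarith [mul_pos hq hpos]
      have hmin2 : min (-K - 1) (-1) ≤ -1 := min_le_right _ _
      linarith
end

section
/- (Lower bound on minimizers, long positions) Under the assumptions of the previous statement (Assumption A.1 in the paper, with limsup_n p^n(∞) < p̃ < p∞₊(0)), any sequence (q̂_n) of minimizers of q ↦ q p̃^n - q p^n(q) over (0,∞) satisfies liminf_n q̂_n / r_n > 0. -/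
open Filter Topology

theorem stmt7 (p : ℕ → ℝ → ℝ)
    (hanti : ∀ n, AntitoneOn (p n) (Set.Ioi 0))
    (hcont : ∀ n, ContinuousOn (p n) (Set.Ioi 0))
    (γ : ℝ) (hγ : 0 < γ)
    (hbound : ∃ C : ℝ, ∀ᶠ n in atTop, ∀ q ∈ Set.Ioc (0:ℝ) γ, q * |p n q| ≤ C)
    (r : ℕ → ℝ) (hrpos : ∀ n, 0 < r n) (hr : Tendsto r atTop atTop)
    (δ : ℝ) (hδ : 0 < δ) (pinf : ℝ → ℝ)
    (hconv : ∀ ℓ : ℝ, 0 < ℓ → ℓ < δ → Tendsto (fun n => p n (ℓ * r n)) atTop (𝓝 (pinf ℓ)))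
    (pninf : ℕ → ℝ) (hpninf : ∀ n, Tendsto (fun q => p n q) atTop (𝓝 (pninf n)))
    (pinf0 : ℝ) (hpinf0 : Tendsto pinf (𝓝[>] 0) (𝓝 pinf0))
    (pt : ℕ → ℝ) (ptl : ℝ) (hpt : Tendsto pt atTop (𝓝 ptl))
    (hlb : ∃ m : ℝ, m < ptl ∧ ∀ᶠ n in atTop, pninf n ≤ m)
    (hub : ptl < pinf0)
    (qhat : ℕ → ℝ) (hqhat_pos : ∀ n, 0 < qhat n)
    (hqhat_min : ∀ n, ∀ q : ℝ, 0 < q →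
      qhat n * pt n - qhat n * p n (qhat n) ≤ q * pt n - q * p n q) :
    ∃ c : ℝ, 0 < c ∧ ∀ᶠ n in atTop, c ≤ qhat n / r n := by
  obtain ⟨C0, hC0⟩ := hbound
  obtain ⟨C, hCdef⟩ : ∃ C : ℝ, C = max C0 0 := ⟨_, rfl⟩
  have hCnn : (0:ℝ) ≤ C := hCdef ▸ le_max_right _ _
  have hC : ∀ᶠ n in atTop, ∀ q ∈ Set.Ioc (0:ℝ) γ, q * |p n q| ≤ C := by
    filter_upwards [hC0] with n h q hq
    exact (h q hq).trans (hCdef ▸ le_max_left _ _)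
  -- choose ℓ small with pinf ℓ > ptl and ℓ < δ
  have hev : ∀ᶠ ℓ in 𝓝[>] (0:ℝ), (ptl < pinf ℓ ∧ ℓ < δ) ∧ 0 < ℓ := by
    have h1 : ∀ᶠ ℓ in 𝓝[>] (0:ℝ), ptl < pinf ℓ :=
      hpinf0.eventually (eventually_gt_nhds hub)
    have h2 : ∀ᶠ ℓ in 𝓝[>] (0:ℝ), ℓ < δ :=
      Filter.Eventually.filter_mono nhdsWithin_le_nhds (eventually_lt_nhds hδ)
    exact (h1.and h2).and self_mem_nhdsWithin
  obtain ⟨ℓ, ⟨hℓpt, hℓδ⟩, hℓpos⟩ := hev.exists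
  obtain ⟨ε, hεdef⟩ : ∃ ε : ℝ, ε = pinf ℓ - ptl := ⟨_, rfl⟩
  have hε : 0 < ε := by rw [hεdef]; linarith
  obtain ⟨M, hMdef⟩ : ∃ M : ℝ, M = |ptl| + 1 := ⟨_, rfl⟩
  have hM1 : (1:ℝ) ≤ M := by have := abs_nonneg ptl; linarith
  obtain ⟨K, hKdef⟩ : ∃ K : ℝ, K = C / γ + M := ⟨_, rfl⟩
  have hK : 0 < K := by
    have : 0 ≤ C / γ := div_nonneg hCnn hγ.le
    linarith
  refine ⟨ε * ℓ / (2 * K), by positivity, ?_⟩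
  have E1 : ∀ᶠ n in atTop, pt n < ptl + ε / 4 :=
    hpt.eventually (eventually_lt_nhds (by linarith))
  have E2 : ∀ᶠ n in atTop, pinf ℓ - ε / 4 < p n (ℓ * r n) :=
    (hconv ℓ hℓpos hℓδ).eventually (eventually_gt_nhds (by linarith))
  have E3 : ∀ᶠ n in atTop, |pt n| < M :=
    hpt.abs.eventually (eventually_lt_nhds (by linarith))
  have E5 : ∀ᶠ n in atTop, (C + γ * M) / (ε / 2 * ℓ) < r n :=
    hr.eventually_gt_atTop _
  filter_upwards [E1, E2, E3, E5, hC] with n h1 h2 h3 h5 hCn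
  have hrn := hrpos n
  have hQ := hqhat_pos n
  -- key lower bound on (qhat n) * (p n (qhat n) - pt n)
  have hmin := hqhat_min n (ℓ * r n) (by positivity)
  have hkey : ε / 2 * ℓ * r n ≤ qhat n * (p n (qhat n) - pt n) := by
    have hdiff : pt n - p n (ℓ * r n) ≤ -(ε / 2) := by
      rw [hεdef] at h1 h2 ⊢; linarith
    nlinarith [mul_pos hℓpos hrn]
  have hE5' : C + γ * M < ε / 2 * ℓ * r n := by
    rw [div_lt_iff₀ (by positivity)] at h5
    linarith
  by_cases hcase : qhat n ≤ γ
  · exfalso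
    have hb := hCn (qhat n) ⟨hQ, hcase⟩
    have h1' : qhat n * p n (qhat n) ≤ qhat n * |p n (qhat n)| :=
      mul_le_mul_of_nonneg_left (le_abs_self _) hQ.le
    have h2' : qhat n * |pt n| ≤ γ * M :=
      mul_le_mul hcase h3.le (abs_nonneg _) hγ.le
    have h3' : -(qhat n * pt n) ≤ qhat n * |pt n| := by
      rw [← mul_neg]; exact mul_le_mul_of_nonneg_left (neg_le_abs _) hQ.le
    nlinarith
  · push_neg at hcase
    have hpγ : p n (qhat n) ≤ p n γ :=
      hanti n (Set.mem_Ioi.mpr hγ) (Set.mem_Ioi.mpr hQ) hcase.le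
    have hpγb : p n γ ≤ C / γ := by
      have hb := hCn γ ⟨hγ, le_refl _⟩
      rw [le_div_iff₀ hγ]
      nlinarith [le_abs_self (p n γ)]
    have hup : qhat n * (p n (qhat n) - pt n) ≤ qhat n * K := by
      have : p n (qhat n) - pt n ≤ K := by
        have := neg_le_abs (pt n)
        rw [hKdef]; linarith
      exact mul_le_mul_of_nonneg_left this hQ.le
    have hQK : ε / 2 * ℓ * r n ≤ qhat n * K := le_trans hkey hup
    rw [le_div_iff₀ hrn, div_mul_eq_mul_div, div_le_iff₀ (by positivity)]
    nlinarith
end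

section
/- (Upper bound on minimizers, long positions) In the setting of Proposition A.1, define δ⁺ := sup{k > 0 : p^n(ℓ r_n) → p∞(ℓ) for all 0 < ℓ < k} ∈ [δ, ∞]. If in addition lim_{ℓ↑δ⁺} p∞(ℓ) < p̃ < p∞₊(0), then any sequence (q̂_n) of minimizers satisfies limsup_n q̂_n / r_n < δ⁺. -/
open Filter Topology

theorem stmt8 (p : ℕ → ℝ → ℝ)
    (hanti : ∀ n, AntitoneOn (p n) (Set.Ioi 0))
    (hcont : ∀ n, ContinuousOn (p n) (Set.Ioi 0))
    (γ : ℝ) (hγ : 0 < γ)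
    (hbound : ∃ C : ℝ, ∀ᶠ n in atTop, ∀ q ∈ Set.Ioc (0:ℝ) γ, q * |p n q| ≤ C)
    (r : ℕ → ℝ) (hrpos : ∀ n, 0 < r n) (hr : Tendsto r atTop atTop)
    (δ : ℝ) (hδ : 0 < δ) (pinf : ℝ → ℝ)
    (hconv : ∀ ℓ : ℝ, 0 < ℓ → ℓ < δ → Tendsto (fun n => p n (ℓ * r n)) atTop (𝓝 (pinf ℓ)))
    (pninf : ℕ → ℝ) (hpninf : ∀ n, Tendsto (fun q => p n q) atTop (𝓝 (pninf n)))
    (pinf0 : ℝ) (hpinf0 : Tendsto pinf (𝓝[>] 0) (𝓝 pinf0))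
    (hstanding : ∃ m : ℝ, m < pinf0 ∧ ∀ᶠ n in atTop, pninf n ≤ m)
    (δplus : EReal)
    (hδplus : δplus = sSup {k : EReal | ∃ k' : ℝ, k = (k' : EReal) ∧ 0 < k' ∧
      ∀ ℓ : ℝ, 0 < ℓ → ℓ < k' → Tendsto (fun n => p n (ℓ * r n)) atTop (𝓝 (pinf ℓ))})
    (hpinf_anti : ∀ ℓ₁ ℓ₂ : ℝ, 0 < ℓ₁ → ℓ₁ ≤ ℓ₂ → (ℓ₂ : EReal) < δplus → pinf ℓ₂ ≤ pinf ℓ₁)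
    (pt : ℕ → ℝ) (ptl : ℝ) (hpt : Tendsto pt atTop (𝓝 ptl))
    (hlb : ∃ ℓ₀ : ℝ, 0 < ℓ₀ ∧ (ℓ₀ : EReal) < δplus ∧ pinf ℓ₀ < ptl)
    (hub : ptl < pinf0)
    (qhat : ℕ → ℝ) (hqhat_pos : ∀ n, 0 < qhat n)
    (hqhat_min : ∀ n, ∀ q : ℝ, 0 < q →
      qhat n * pt n - qhat n * p n (qhat n) ≤ q * pt n - q * p n q) :
    ∃ c : ℝ, (c : EReal) < δplus ∧ ∀ᶠ n in atTop, qhat n / r n ≤ c := by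

  obtain ⟨ℓ₀, hℓ₀pos, hℓ₀lt, hℓ₀ptl⟩ := hlb
  -- convergence at ℓ₀
  have hconv₀ : Tendsto (fun n => p n (ℓ₀ * r n)) atTop (𝓝 (pinf ℓ₀)) := by
    rw [hδplus] at hℓ₀lt
    obtain ⟨b, hb, hlb⟩ := lt_sSup_iff.mp hℓ₀lt
    obtain ⟨k', rfl, hk'pos, hk'⟩ := hb
    exact hk' ℓ₀ hℓ₀pos (by exact_mod_cast hlb)
  -- pick small ℓ₁
  have hev : ∀ᶠ ℓ in 𝓝[>] (0:ℝ), ptl < pinf ℓ ∧ 0 < ℓ ∧ ℓ < δ := by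
    filter_upwards [hpinf0.eventually (eventually_gt_nhds hub),
      self_mem_nhdsWithin, Ioo_mem_nhdsGT hδ] with ℓ h1 h2 h3
    exact ⟨h1, h2, h3.2⟩
  obtain ⟨ℓ₁, hℓ₁ptl, hℓ₁pos, hℓ₁δ⟩ := hev.exists
  have hconv₁ := hconv ℓ₁ hℓ₁pos hℓ₁δ
  refine ⟨ℓ₀, hℓ₀lt, ?_⟩
  have E1 : ∀ᶠ n in atTop, 0 < pt n - p n (ℓ₀ * r n) :=
    (hpt.sub hconv₀).eventually (eventually_gt_nhds (by linarith))
  have E2 : ∀ᶠ n in atTop, pt n - p n (ℓ₁ * r n) < 0 :=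
    (hpt.sub hconv₁).eventually (eventually_lt_nhds (by linarith))
  filter_upwards [E1, E2] with n h1 h2
  by_contra h
  push_neg at h
  have hrn := hrpos n
  have hq : ℓ₀ * r n < qhat n := by
    rw [lt_div_iff₀ hrn] at h; linarith
  have hmono : p n (qhat n) ≤ p n (ℓ₀ * r n) :=
    hanti n (Set.mem_Ioi.mpr (by positivity)) (Set.mem_Ioi.mpr ((by positivity : (0:ℝ) < ℓ₀ * r n).trans hq)) hq.le
  have hmin := hqhat_min n (ℓ₁ * r n) (by positivity)
  have hqpos := hqhat_pos n
  have h3 : (0:ℝ) < ℓ₁ * r n := by positivity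
  nlinarith [mul_pos hqpos h1, mul_neg_of_pos_of_neg h3 h2,
    mul_le_mul_of_nonneg_left hmono hqpos.le]
end
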